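/- Every recursive Eulerian triangulation G admits a 5-dynamic proper 6-coloring with the property that any two adjacent degree-4 vertices u, v have distinct missing color sets, i.e., the set of colors not appearing on the closed neighborhood of u differs from that of v. In particular χ_5(G) ≤ 6. -/

import Mathlib

open Finset

/-- The graph on `ℕ` whose edges are the pairs of distinct vertices lying on a common face;
for a triangulation, the set of (triangular) faces determines the graph. -/
def facesGraph (faces : Finset (Finset ℕ)) : SimpleGraph ℕ where
  Adj u v := u ≠ v ∧ ∃ t ∈ faces, u ∈ t ∧ v ∈ t
  symm := ⟨by
    rintro u v ⟨huv, t, ht, hu, hv⟩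
    exact ⟨huv.symm, t, ht, hv, hu⟩⟩
  loopless := ⟨fun v h => h.1 rfl⟩

instance (faces : Finset (Finset ℕ)) : DecidableRel (facesGraph faces).Adj :=
  fun u v => inferInstanceAs (Decidable (u ≠ v ∧ ∃ t ∈ faces, u ∈ t ∧ v ∈ t))

/-- The vertex set of the triangulation given by its set of faces. -/
def rVerts (faces : Finset (Finset ℕ)) : Finset ℕ := faces.sup id

/-- The neighborhood of a vertex in the triangulation given by its set of faces. -/
def rNbr (faces : Finset (Finset ℕ)) (v : ℕ) : Finset ℕ :=
  (rVerts faces).filter fun w => (facesGraph faces).Adj v w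

/-- The degree of a vertex in the triangulation given by its set of faces. -/
def rDeg (faces : Finset (Finset ℕ)) (v : ℕ) : ℕ := (rNbr faces v).card

/-- Recursive Eulerian triangulations, encoded by their sets of (triangular) faces:
a triangle is one; and from a recursive Eulerian triangulation one obtains another by selecting
a face `{a, b, c}`, drawing a new triangle `{x, y, z}` inside it, and joining both ends of each
edge of the new triangle with a different vertex of the selected face, so that the selected face
together with the new triangle induces an octahedron (with `a, x`, `b, y` and `c, z` the three
non-adjacent pairs); the selected face is replaced by the seven new faces thus created. -/
inductive RecEulerian : Finset (Finset ℕ) → Prop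
  | base (a b c : ℕ) (hab : a ≠ b) (hac : a ≠ c) (hbc : b ≠ c) :
      RecEulerian {{a, b, c}}
  | step (faces : Finset (Finset ℕ)) (a b c x y z : ℕ)
      (hrec : RecEulerian faces) (hface : ({a, b, c} : Finset ℕ) ∈ faces)
      (hnodup : ([a, b, c, x, y, z] : List ℕ).Nodup)
      (hx : x ∉ rVerts faces) (hy : y ∉ rVerts faces) (hz : z ∉ rVerts faces) :
      RecEulerian ((faces.erase {a, b, c}) ∪
        {{a, b, z}, {a, y, c}, {a, y, z}, {x, b, c}, {x, b, z}, {x, y, c}, {x, y, z}})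


lemma mem_rVerts {F : Finset (Finset ℕ)} {v : ℕ} : v ∈ rVerts F ↔ ∃ t ∈ F, v ∈ t := by
  simp [rVerts, Finset.mem_sup]

lemma mem_rNbr {F : Finset (Finset ℕ)} {v w : ℕ} :
    w ∈ rNbr F v ↔ (facesGraph F).Adj v w := by
  constructor
  · intro h; exact (Finset.mem_filter.mp h).2
  · intro h
    refine Finset.mem_filter.mpr ⟨?_, h⟩
    obtain ⟨-, t, ht, -, hw⟩ := h
    exact mem_rVerts.mpr ⟨t, ht, hw⟩

/-- Colors on the closed neighborhood of `v`. -/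
def closedC (F : Finset (Finset ℕ)) (c : ℕ → Fin 6) (v : ℕ) : Finset (Fin 6) :=
  (insert v (rNbr F v)).image c

/-- The strengthened invariant. -/
def Good (F : Finset (Finset ℕ)) (c : ℕ → Fin 6) : Prop :=
  (∀ u v : ℕ, (facesGraph F).Adj u v → c u ≠ c v) ∧
  (∀ v ∈ rVerts F, Even (rDeg F v)) ∧
  (∀ v ∈ rVerts F, min 6 (rDeg F v + 1) ≤ (closedC F c v).card) ∧
  (∀ u v : ℕ, rDeg F u = 4 → rDeg F v = 4 → (facesGraph F).Adj u v →
    closedC F c u ≠ closedC F c v)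

lemma missing_eq (F : Finset (Finset ℕ)) (c : ℕ → Fin 6) (v : ℕ) :
    (Finset.univ.filter fun i : Fin 6 => c v ≠ i ∧ ∀ w ∈ rNbr F v, c w ≠ i) =
      Finset.univ \ closedC F c v := by
  ext i
  simp only [Finset.mem_filter, Finset.mem_univ, true_and, Finset.mem_sdiff, closedC,
    Finset.mem_image, Finset.mem_insert, not_exists]
  constructor
  · rintro ⟨h1, h2⟩ w hw
    rcases hw.1 with rfl | hw'
    · exact h1 hw.2
    · exact h2 w hw' hw.2
  · intro h
    exact ⟨fun he => h v ⟨Or.inl rfl, he⟩, fun w hw he => h w ⟨Or.inr hw, he⟩⟩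

lemma base_good (a b c : ℕ) (hab : a ≠ b) (hac : a ≠ c) (hbc : b ≠ c) :
    ∃ col, Good {{a, b, c}} col := by
  classical
  set col : ℕ → Fin 6 := fun n => if n = a then 0 else if n = b then 1 else 2 with hcol
  have hA : col a = 0 := by simp [hcol]
  have hB : col b = 1 := by simp [hcol, Ne.symm hab]
  have hC : col c = 2 := by simp [hcol, Ne.symm hac, Ne.symm hbc]
  have hV : rVerts {{a, b, c}} = {a, b, c} := by
    simp [rVerts]
  have hN : ∀ v, rNbr {{a, b, c}} v = if v ∈ ({a, b, c} : Finset ℕ)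
      then ({a, b, c} : Finset ℕ).erase v else ∅ := by
    intro v
    split_ifs with hv
    · ext w
      simp only [mem_rNbr, facesGraph, Finset.mem_singleton, Finset.mem_erase]
      constructor
      · rintro ⟨hvw, t, rfl, -, hw⟩
        exact ⟨fun h => hvw h.symm, hw⟩
      · rintro ⟨hwv, hw⟩
        exact ⟨fun h => hwv h.symm, {a, b, c}, rfl, hv, hw⟩
    · ext w
      simp only [mem_rNbr, facesGraph, Finset.mem_singleton, Finset.notMem_empty, iff_false]
      rintro ⟨-, t, rfl, hv', -⟩
      exact hv hv'
  have hcard3 : ({a, b, c} : Finset ℕ).card = 3 := by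
    rw [Finset.card_insert_of_notMem (by simp [hab, hac]),
      Finset.card_insert_of_notMem (by simp [hbc]), Finset.card_singleton]
  have hdeg : ∀ v ∈ ({a, b, c} : Finset ℕ), rDeg {{a, b, c}} v = 2 := by
    intro v hv
    rw [rDeg, hN, if_pos hv, Finset.card_erase_of_mem hv, hcard3]
  refine ⟨col, ?_, ?_, ?_, ?_⟩
  · rintro u v ⟨huv, t, ht, hu, hv⟩
    simp only [Finset.mem_singleton] at ht
    subst ht
    simp only [Finset.mem_insert, Finset.mem_singleton] at hu hv
    rcases hu with rfl | rfl | rfl <;> rcases hv with rfl | rfl | rfl <;>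
      first
        | exact absurd rfl huv
        | (rw [hA, hB]; decide) | (rw [hB, hA]; decide)
        | (rw [hA, hC]; decide) | (rw [hC, hA]; decide)
        | (rw [hB, hC]; decide) | (rw [hC, hB]; decide)
  · intro v hv
    rw [hV] at hv
    rw [hdeg v hv]
    decide
  · intro v hv
    rw [hV] at hv
    rw [hdeg v hv]
    have hclosed : closedC {{a, b, c}} col v = ({a, b, c} : Finset ℕ).image col := by
      rw [closedC, hN, if_pos hv, Finset.insert_erase hv]
    rw [hclosed]
    have : ({a, b, c} : Finset ℕ).image col = {0, 1, 2} := by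
      rw [Finset.image_insert, Finset.image_insert, Finset.image_singleton, hA, hB, hC]
    rw [this]
    decide
  · intro u v hu hv hadj
    have : u ∈ rVerts {{a, b, c}} := by
      obtain ⟨-, t, ht, hut, -⟩ := hadj
      exact mem_rVerts.mpr ⟨t, ht, hut⟩
    rw [hV] at this
    rw [hdeg u this] at hu
    exact absurd hu (by norm_num)

lemma pick3 (free A B C : Finset (Fin 6)) (hfree : free.card = 3)
    (hAB : Disjoint A B) (hAC : Disjoint A C) (hBC : Disjoint B C)
    (hA : A.card ≤ 1) (hB : B.card ≤ 1) (hC : C.card ≤ 1) :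
    ∃ p ∈ free, ∃ q ∈ free, ∃ r ∈ free, p ≠ q ∧ p ≠ r ∧ q ≠ r ∧
      p ∉ A ∧ q ∉ B ∧ r ∉ C := by
  classical
  obtain ⟨u, v, w, huv, huw, hvw, rfl⟩ := Finset.card_eq_three.mp hfree
  have hu : u ∈ ({u, v, w} : Finset (Fin 6)) := by simp
  have hv : v ∈ ({u, v, w} : Finset (Fin 6)) := by simp
  have hw : w ∈ ({u, v, w} : Finset (Fin 6)) := by simp
  by_cases huA : u ∈ A
  · have huB : u ∉ B := fun h => (Finset.disjoint_left.mp hAB huA) h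
    have huC : u ∉ C := fun h => (Finset.disjoint_left.mp hAC huA) h
    have hvA : v ∉ A := fun h => huv (Finset.card_le_one.mp hA u huA v h)
    by_cases hwC : w ∈ C
    · have hwB : w ∉ B := fun h => (Finset.disjoint_left.mp hBC h) hwC
      exact ⟨v, hv, w, hw, u, hu, hvw, fun h => huv h.symm, fun h => huw h.symm,
        hvA, hwB, huC⟩
    · exact ⟨v, hv, u, hu, w, hw, fun h => huv h.symm, hvw, huw, hvA, huB, hwC⟩
  · by_cases hvB : v ∈ B
    · have hwB : w ∉ B := fun h => hvw (Finset.card_le_one.mp hB v hvB w h)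
      have hvC : v ∉ C := fun h => (Finset.disjoint_left.mp hBC hvB) h
      exact ⟨u, hu, w, hw, v, hv, huw, huv, fun h => hvw h.symm, huA, hwB, hvC⟩
    · by_cases hwC : w ∈ C
      · have hwB : w ∉ B := fun h => (Finset.disjoint_left.mp hBC h) hwC
        have hvC : v ∉ C := fun h => hvw (Finset.card_le_one.mp hC w hwC v h).symm
        exact ⟨u, hu, w, hw, v, hv, huw, huv, fun h => hvw h.symm, huA, hwB, hvC⟩
      · exact ⟨u, hu, v, hv, w, hw, huv, huw, hvw, huA, hvB, hwC⟩

def newF (F : Finset (Finset ℕ)) (a b c x y z : ℕ) : Finset (Finset ℕ) :=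
  (F.erase {a, b, c}) ∪ {{a, b, z}, {a, y, c}, {a, y, z}, {x, b, c}, {x, b, z}, {x, y, c}, {x, y, z}}

section Step

variable {F : Finset (Finset ℕ)} {a b c x y z : ℕ}

lemma nodup_ne (hnodup : ([a, b, c, x, y, z] : List ℕ).Nodup) :
    a ≠ b ∧ a ≠ c ∧ a ≠ x ∧ a ≠ y ∧ a ≠ z ∧ b ≠ c ∧ b ≠ x ∧ b ≠ y ∧ b ≠ z ∧
    c ≠ x ∧ c ≠ y ∧ c ≠ z ∧ x ≠ y ∧ x ≠ z ∧ y ≠ z := by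
  simp only [List.nodup_cons, List.mem_cons, List.not_mem_nil, or_false, List.nodup_nil,
    and_true, not_or] at hnodup
  tauto

lemma mem_newF {t : Finset ℕ} : t ∈ newF F a b c x y z ↔
    (t ∈ F.erase {a, b, c}) ∨ t = {a, b, z} ∨ t = {a, y, c} ∨ t = {a, y, z} ∨
    t = {x, b, c} ∨ t = {x, b, z} ∨ t = {x, y, c} ∨ t = {x, y, z} := by
  simp only [newF, Finset.mem_union, Finset.mem_insert, Finset.mem_singleton]

lemma adj_new_old (hface : ({a, b, c} : Finset ℕ) ∈ F) {u v : ℕ}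
    (hux : u ≠ x) (huy : u ≠ y) (huz : u ≠ z) (hvx : v ≠ x) (hvy : v ≠ y) (hvz : v ≠ z) :
    (facesGraph (newF F a b c x y z)).Adj u v ↔ (facesGraph F).Adj u v := by
  have f1 : ({a, b, z} : Finset ℕ) ∈ newF F a b c x y z := mem_newF.mpr (by tauto)
  have f2 : ({a, y, c} : Finset ℕ) ∈ newF F a b c x y z := mem_newF.mpr (by tauto)
  have f4 : ({x, b, c} : Finset ℕ) ∈ newF F a b c x y z := mem_newF.mpr (by tauto)
  constructor
  · rintro ⟨huv, t, ht, hut, hvt⟩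
    rcases mem_newF.mp ht with h | rfl | rfl | rfl | rfl | rfl | rfl | rfl
    · exact ⟨huv, t, Finset.mem_of_mem_erase h, hut, hvt⟩
    all_goals
      refine ⟨huv, {a, b, c}, hface, ?_, ?_⟩ <;>
      · simp only [Finset.mem_insert, Finset.mem_singleton] at hut hvt ⊢
        omega
  · rintro ⟨huv, t, ht, hut, hvt⟩
    by_cases hT : t = {a, b, c}
    · subst hT
      simp only [Finset.mem_insert, Finset.mem_singleton] at hut hvt
      rcases hut with rfl | rfl | rfl <;> rcases hvt with rfl | rfl | rfl <;>
        first
          | exact absurd rfl huv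
          | (refine ⟨huv, _, f1, ?_, ?_⟩ <;> (simp; done))
          | (refine ⟨huv, _, f2, ?_, ?_⟩ <;> (simp; done))
          | (refine ⟨huv, _, f4, ?_, ?_⟩ <;> (simp; done))
    · exact ⟨huv, t, mem_newF.mpr (Or.inl (Finset.mem_erase.mpr ⟨hT, ht⟩)), hut, hvt⟩

lemma adj_new_x (hx : x ∉ rVerts F) (hnodup : ([a, b, c, x, y, z] : List ℕ).Nodup) {w : ℕ} :
    (facesGraph (newF F a b c x y z)).Adj x w ↔ w = b ∨ w = c ∨ w = y ∨ w = z := by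
  obtain ⟨hab, hac, hax, hay, haz, hbc, hbx, hby, hbz, hcx, hcy, hcz, hxy, hxz, hyz⟩ :=
    nodup_ne hnodup
  have f4 : ({x, b, c} : Finset ℕ) ∈ newF F a b c x y z := mem_newF.mpr (by tauto)
  have f7 : ({x, y, z} : Finset ℕ) ∈ newF F a b c x y z := mem_newF.mpr (by tauto)
  constructor
  · rintro ⟨hxw, t, ht, hxt, hwt⟩
    rcases mem_newF.mp ht with h | rfl | rfl | rfl | rfl | rfl | rfl | rfl
    · exact absurd (mem_rVerts.mpr ⟨t, Finset.mem_of_mem_erase h, hxt⟩) hx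
    all_goals
      simp only [Finset.mem_insert, Finset.mem_singleton] at hxt hwt
      omega
  · rintro (rfl | rfl | rfl | rfl)
    · exact ⟨hbx.symm, _, f4, by simp, by simp⟩
    · exact ⟨hcx.symm, _, f4, by simp, by simp⟩
    · exact ⟨hxy, _, f7, by simp, by simp⟩
    · exact ⟨hxz, _, f7, by simp, by simp⟩

lemma adj_new_y (hy : y ∉ rVerts F) (hnodup : ([a, b, c, x, y, z] : List ℕ).Nodup) {w : ℕ} :
    (facesGraph (newF F a b c x y z)).Adj y w ↔ w = a ∨ w = c ∨ w = x ∨ w = z := by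
  obtain ⟨hab, hac, hax, hay, haz, hbc, hbx, hby, hbz, hcx, hcy, hcz, hxy, hxz, hyz⟩ :=
    nodup_ne hnodup
  have f2 : ({a, y, c} : Finset ℕ) ∈ newF F a b c x y z := mem_newF.mpr (by tauto)
  have f7 : ({x, y, z} : Finset ℕ) ∈ newF F a b c x y z := mem_newF.mpr (by tauto)
  constructor
  · rintro ⟨hyw, t, ht, hyt, hwt⟩
    rcases mem_newF.mp ht with h | rfl | rfl | rfl | rfl | rfl | rfl | rfl
    · exact absurd (mem_rVerts.mpr ⟨t, Finset.mem_of_mem_erase h, hyt⟩) hy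
    all_goals
      simp only [Finset.mem_insert, Finset.mem_singleton] at hyt hwt
      omega
  · rintro (rfl | rfl | rfl | rfl)
    · exact ⟨hay.symm, _, f2, by simp, by simp⟩
    · exact ⟨hcy.symm, _, f2, by simp, by simp⟩
    · exact ⟨hxy.symm, _, f7, by simp, by simp⟩
    · exact ⟨hyz, _, f7, by simp, by simp⟩

lemma adj_new_z (hz : z ∉ rVerts F) (hnodup : ([a, b, c, x, y, z] : List ℕ).Nodup) {w : ℕ} :
    (facesGraph (newF F a b c x y z)).Adj z w ↔ w = a ∨ w = b ∨ w = x ∨ w = y := by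
  obtain ⟨hab, hac, hax, hay, haz, hbc, hbx, hby, hbz, hcx, hcy, hcz, hxy, hxz, hyz⟩ :=
    nodup_ne hnodup
  have f1 : ({a, b, z} : Finset ℕ) ∈ newF F a b c x y z := mem_newF.mpr (by tauto)
  have f7 : ({x, y, z} : Finset ℕ) ∈ newF F a b c x y z := mem_newF.mpr (by tauto)
  constructor
  · rintro ⟨hzw, t, ht, hzt, hwt⟩
    rcases mem_newF.mp ht with h | rfl | rfl | rfl | rfl | rfl | rfl | rfl
    · exact absurd (mem_rVerts.mpr ⟨t, Finset.mem_of_mem_erase h, hzt⟩) hz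
    all_goals
      simp only [Finset.mem_insert, Finset.mem_singleton] at hzt hwt
      omega
  · rintro (rfl | rfl | rfl | rfl)
    · exact ⟨haz.symm, _, f1, by simp, by simp⟩
    · exact ⟨hbz.symm, _, f1, by simp, by simp⟩
    · exact ⟨hxz.symm, _, f7, by simp, by simp⟩
    · exact ⟨hyz.symm, _, f7, by simp, by simp⟩

lemma rVerts_newF (hface : ({a, b, c} : Finset ℕ) ∈ F) :
    rVerts (newF F a b c x y z) = rVerts F ∪ {x, y, z} := by
  have f1 : ({a, b, z} : Finset ℕ) ∈ newF F a b c x y z := mem_newF.mpr (by tauto)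
  have f2 : ({a, y, c} : Finset ℕ) ∈ newF F a b c x y z := mem_newF.mpr (by tauto)
  have f4 : ({x, b, c} : Finset ℕ) ∈ newF F a b c x y z := mem_newF.mpr (by tauto)
  have f7 : ({x, y, z} : Finset ℕ) ∈ newF F a b c x y z := mem_newF.mpr (by tauto)
  have ha : a ∈ rVerts F := mem_rVerts.mpr ⟨_, hface, by simp⟩
  have hb : b ∈ rVerts F := mem_rVerts.mpr ⟨_, hface, by simp⟩
  have hc : c ∈ rVerts F := mem_rVerts.mpr ⟨_, hface, by simp⟩
  ext v
  simp only [Finset.mem_union, Finset.mem_insert, Finset.mem_singleton]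
  constructor
  · intro hv
    obtain ⟨t, ht, hvt⟩ := mem_rVerts.mp hv
    rcases mem_newF.mp ht with h | rfl | rfl | rfl | rfl | rfl | rfl | rfl
    · exact Or.inl (mem_rVerts.mpr ⟨t, Finset.mem_of_mem_erase h, hvt⟩)
    all_goals
      simp only [Finset.mem_insert, Finset.mem_singleton] at hvt
      rcases hvt with rfl | rfl | rfl <;> tauto
  · rintro (hv | rfl | rfl | rfl)
    · obtain ⟨t, ht, hvt⟩ := mem_rVerts.mp hv
      by_cases hT : t = {a, b, c}
      · subst hT
        simp only [Finset.mem_insert, Finset.mem_singleton] at hvt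
        rcases hvt with rfl | rfl | rfl
        · exact mem_rVerts.mpr ⟨_, f1, by simp⟩
        · exact mem_rVerts.mpr ⟨_, f1, by simp⟩
        · exact mem_rVerts.mpr ⟨_, f2, by simp⟩
      · exact mem_rVerts.mpr ⟨t, mem_newF.mpr (Or.inl (Finset.mem_erase.mpr ⟨hT, ht⟩)), hvt⟩
    · exact mem_rVerts.mpr ⟨_, f7, by simp⟩
    · exact mem_rVerts.mpr ⟨_, f7, by simp⟩
    · exact mem_rVerts.mpr ⟨_, f7, by simp⟩

lemma rNbr_newF_x (hx : x ∉ rVerts F)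
    (hnodup : ([a, b, c, x, y, z] : List ℕ).Nodup) :
    rNbr (newF F a b c x y z) x = {b, c, y, z} := by
  ext w
  rw [mem_rNbr, adj_new_x hx hnodup]
  simp

lemma rNbr_newF_y (hy : y ∉ rVerts F)
    (hnodup : ([a, b, c, x, y, z] : List ℕ).Nodup) :
    rNbr (newF F a b c x y z) y = {a, c, x, z} := by
  ext w
  rw [mem_rNbr, adj_new_y hy hnodup]
  simp

lemma rNbr_newF_z (hz : z ∉ rVerts F)
    (hnodup : ([a, b, c, x, y, z] : List ℕ).Nodup) :
    rNbr (newF F a b c x y z) z = {a, b, x, y} := by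
  ext w
  rw [mem_rNbr, adj_new_z hz hnodup]
  simp

lemma rNbr_newF_a (hface : ({a, b, c} : Finset ℕ) ∈ F)
    (hx : x ∉ rVerts F) (hy : y ∉ rVerts F) (hz : z ∉ rVerts F)
    (hnodup : ([a, b, c, x, y, z] : List ℕ).Nodup) :
    rNbr (newF F a b c x y z) a = insert y (insert z (rNbr F a)) := by
  obtain ⟨hab, hac, hax, hay, haz, hbc, hbx, hby, hbz, hcx, hcy, hcz, hxy, hxz, hyz⟩ :=
    nodup_ne hnodup
  ext w
  simp only [Finset.mem_insert]
  rcases eq_or_ne w x with rfl | hwx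
  · rw [mem_rNbr, (facesGraph _).adj_comm, adj_new_x hx hnodup]
    simp only [mem_rNbr]
    constructor
    · intro h; omega
    · rintro (rfl | rfl | h)
      · exact absurd rfl hxy
      · exact absurd rfl hxz
      · exact absurd (mem_rVerts.mpr ⟨_, h.2.choose_spec.1, h.2.choose_spec.2.2⟩) hx
  · rcases eq_or_ne w y with rfl | hwy
    · rw [mem_rNbr, (facesGraph _).adj_comm, adj_new_y hy hnodup]
      simp
    · rcases eq_or_ne w z with rfl | hwz
      · rw [mem_rNbr, (facesGraph _).adj_comm, adj_new_z hz hnodup]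
        simp
      · rw [mem_rNbr, adj_new_old hface hax hay haz hwx hwy hwz, ← mem_rNbr]
        simp [hwy, hwz]

lemma rNbr_newF_b (hface : ({a, b, c} : Finset ℕ) ∈ F)
    (hx : x ∉ rVerts F) (hy : y ∉ rVerts F) (hz : z ∉ rVerts F)
    (hnodup : ([a, b, c, x, y, z] : List ℕ).Nodup) :
    rNbr (newF F a b c x y z) b = insert x (insert z (rNbr F b)) := by
  obtain ⟨hab, hac, hax, hay, haz, hbc, hbx, hby, hbz, hcx, hcy, hcz, hxy, hxz, hyz⟩ :=
    nodup_ne hnodup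
  ext w
  simp only [Finset.mem_insert]
  rcases eq_or_ne w y with rfl | hwy
  · rw [mem_rNbr, (facesGraph _).adj_comm, adj_new_y hy hnodup]
    simp only [mem_rNbr]
    constructor
    · intro h; omega
    · rintro (rfl | rfl | h)
      · exact absurd rfl (Ne.symm hxy)
      · exact absurd rfl hyz
      · exact absurd (mem_rVerts.mpr ⟨_, h.2.choose_spec.1, h.2.choose_spec.2.2⟩) hy
  · rcases eq_or_ne w x with rfl | hwx
    · rw [mem_rNbr, (facesGraph _).adj_comm, adj_new_x hx hnodup]
      simp
    · rcases eq_or_ne w z with rfl | hwz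
      · rw [mem_rNbr, (facesGraph _).adj_comm, adj_new_z hz hnodup]
        simp
      · rw [mem_rNbr, adj_new_old hface hbx hby hbz hwx hwy hwz, ← mem_rNbr]
        simp [hwx, hwz]

lemma rNbr_newF_c (hface : ({a, b, c} : Finset ℕ) ∈ F)
    (hx : x ∉ rVerts F) (hy : y ∉ rVerts F) (hz : z ∉ rVerts F)
    (hnodup : ([a, b, c, x, y, z] : List ℕ).Nodup) :
    rNbr (newF F a b c x y z) c = insert x (insert y (rNbr F c)) := by
  obtain ⟨hab, hac, hax, hay, haz, hbc, hbx, hby, hbz, hcx, hcy, hcz, hxy, hxz, hyz⟩ :=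
    nodup_ne hnodup
  ext w
  simp only [Finset.mem_insert]
  rcases eq_or_ne w z with rfl | hwz
  · rw [mem_rNbr, (facesGraph _).adj_comm, adj_new_z hz hnodup]
    simp only [mem_rNbr]
    constructor
    · intro h; omega
    · rintro (rfl | rfl | h)
      · exact absurd rfl (Ne.symm hxz)
      · exact absurd rfl (Ne.symm hyz)
      · exact absurd (mem_rVerts.mpr ⟨_, h.2.choose_spec.1, h.2.choose_spec.2.2⟩) hz
  · rcases eq_or_ne w x with rfl | hwx
    · rw [mem_rNbr, (facesGraph _).adj_comm, adj_new_x hx hnodup]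
      simp
    · rcases eq_or_ne w y with rfl | hwy
      · rw [mem_rNbr, (facesGraph _).adj_comm, adj_new_y hy hnodup]
        simp
      · rw [mem_rNbr, adj_new_old hface hcx hcy hcz hwx hwy hwz, ← mem_rNbr]
        simp [hwx, hwy]

lemma rNbr_newF_old (hface : ({a, b, c} : Finset ℕ) ∈ F)
    (hx : x ∉ rVerts F) (hy : y ∉ rVerts F) (hz : z ∉ rVerts F)
    (hnodup : ([a, b, c, x, y, z] : List ℕ).Nodup) {v : ℕ}
    (hva : v ≠ a) (hvb : v ≠ b) (hvc : v ≠ c) (hvx : v ≠ x) (hvy : v ≠ y) (hvz : v ≠ z) :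
    rNbr (newF F a b c x y z) v = rNbr F v := by
  obtain ⟨hab, hac, hax, hay, haz, hbc, hbx, hby, hbz, hcx, hcy, hcz, hxy, hxz, hyz⟩ :=
    nodup_ne hnodup
  ext w
  rcases eq_or_ne w x with rfl | hwx
  · rw [mem_rNbr, (facesGraph _).adj_comm, adj_new_x hx hnodup]
    simp only [mem_rNbr]
    constructor
    · rintro (rfl | rfl | rfl | rfl)
      exacts [absurd rfl hvb, absurd rfl hvc, absurd rfl hvy, absurd rfl hvz]
    · rintro ⟨-, t, ht, -, hxt⟩
      exact absurd (mem_rVerts.mpr ⟨t, ht, hxt⟩) hx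
  · rcases eq_or_ne w y with rfl | hwy
    · rw [mem_rNbr, (facesGraph _).adj_comm, adj_new_y hy hnodup]
      simp only [mem_rNbr]
      constructor
      · rintro (rfl | rfl | rfl | rfl)
        exacts [absurd rfl hva, absurd rfl hvc, absurd rfl hvx, absurd rfl hvz]
      · rintro ⟨-, t, ht, -, hyt⟩
        exact absurd (mem_rVerts.mpr ⟨t, ht, hyt⟩) hy
    · rcases eq_or_ne w z with rfl | hwz
      · rw [mem_rNbr, (facesGraph _).adj_comm, adj_new_z hz hnodup]
        simp only [mem_rNbr]
        constructor
        · rintro (rfl | rfl | rfl | rfl)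
          exacts [absurd rfl hva, absurd rfl hvb, absurd rfl hvx, absurd rfl hvy]
        · rintro ⟨-, t, ht, -, hzt⟩
          exact absurd (mem_rVerts.mpr ⟨t, ht, hzt⟩) hz
      · rw [mem_rNbr, adj_new_old hface hvx hvy hvz hwx hwy hwz, ← mem_rNbr]

end Step

lemma sdiff_singleton_ne {s t : Fin 6} (hst : s ≠ t) :
    (Finset.univ \ {s} : Finset (Fin 6)) ≠ Finset.univ \ {t} := by
  intro he
  have h1 : t ∈ (Finset.univ \ {s} : Finset (Fin 6)) := by simp [Ne.symm hst]
  rw [he] at h1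
  simp at h1

set_option maxHeartbeats 1600000 in
/-- How the closed neighborhood of a vertex of the subdivided triangle changes. -/
lemma tri_update (F G : Finset (Finset ℕ)) (col col2 : ℕ → Fin 6)
    (v0 t1 t2 n1 n2 : ℕ) (s1 s2 s3 : Fin 6)
    (ht1 : t1 ∈ rNbr F v0) (ht2 : t2 ∈ rNbr F v0) (ht12 : t1 ≠ t2)
    (hn1V : n1 ∉ rVerts F) (hn2V : n2 ∉ rVerts F) (hn12 : n1 ≠ n2)
    (hNbr' : rNbr G v0 = insert n1 (insert n2 (rNbr F v0)))
    (hc2old : ∀ n ∈ rVerts F, col2 n = col n) (hc2v0 : col2 v0 = col v0)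
    (hc2n1 : col2 n1 = s1) (hc2n2 : col2 n2 = s2)
    (hclo : min 6 (rDeg F v0 + 1) ≤ (closedC F col v0).card)
    (heven : Even (rDeg F v0))
    (huniv : ({col2 v0, col t1, col t2, s1, s2, s3} : Finset (Fin 6)).card = 6)
    (hmiss : rDeg F v0 = 4 → ∀ i, i ∉ closedC F col v0 → i ≠ s3) :
    rDeg G v0 = rDeg F v0 + 2 ∧
    min 6 (rDeg G v0 + 1) ≤ (closedC G col2 v0).card ∧
    (rDeg G v0 = 4 → closedC G col2 v0 = Finset.univ \ {s3} ∧ rNbr F v0 = {t1, t2}) := by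
  classical
  have hNsub : rNbr F v0 ⊆ rVerts F := Finset.filter_subset _ _
  have hn1N : n1 ∉ rNbr F v0 := fun h => hn1V (hNsub h)
  have hn2N : n2 ∉ rNbr F v0 := fun h => hn2V (hNsub h)
  have hdeg : rDeg G v0 = rDeg F v0 + 2 := by
    rw [rDeg, hNbr', Finset.card_insert_of_notMem (by simp [hn12, hn1N]),
      Finset.card_insert_of_notMem hn2N, rDeg]
  -- the six colors are all of `Fin 6`
  rw [hc2v0] at huniv
  set S6 : Finset (Fin 6) := {col v0, col t1, col t2, s1, s2, s3} with hS6
  have hS6univ : S6 = Finset.univ := Finset.eq_univ_of_card _ (by rw [huniv]; rfl)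
  have hS5card : ({col v0, col t1, col t2, s1, s2} : Finset (Fin 6)).card = 5 := by
    have hsub : S6 ⊆ insert s3 {col v0, col t1, col t2, s1, s2} := by
      intro i hi
      simp only [hS6, Finset.mem_insert, Finset.mem_singleton] at hi
      rcases hi with rfl|rfl|rfl|rfl|rfl|rfl <;> simp
    have h1 := Finset.card_le_card hsub
    have h2 := Finset.card_insert_le s3 ({col v0, col t1, col t2, s1, s2} : Finset (Fin 6))
    have h3 : ({col v0, col t1, col t2, s1, s2} : Finset (Fin 6)).card ≤ 5 := by
      apply le_trans (Finset.card_insert_le _ _)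
      apply Nat.succ_le_succ
      apply le_trans (Finset.card_insert_le _ _)
      apply Nat.succ_le_succ
      apply le_trans (Finset.card_insert_le _ _)
      apply Nat.succ_le_succ
      apply le_trans (Finset.card_insert_le _ _)
      apply Nat.succ_le_succ
      simp
    omega
  have h56 : ∀ i ∈ ({col v0, col t1, col t2, s1, s2} : Finset (Fin 6)), i ≠ s3 := by
    intro i hi heq
    subst heq
    have hsub : S6 ⊆ ({col v0, col t1, col t2, s1, s2} : Finset (Fin 6)) := by
      intro j hj
      simp only [hS6, Finset.mem_insert, Finset.mem_singleton] at hj ⊢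
      rcases hj with rfl|rfl|rfl|rfl|rfl|rfl
      · simp
      · simp
      · simp
      · simp
      · simp
      · simpa using hi
    have := Finset.card_le_card hsub
    omega
  -- the new closed neighborhood
  have hinsert : insert v0 (rNbr G v0) = insert n1 (insert n2 (insert v0 (rNbr F v0))) := by
    rw [hNbr', Finset.insert_comm v0 n1, Finset.insert_comm v0 n2]
  have himgold : (insert v0 (rNbr F v0)).image col2 = closedC F col v0 := by
    rw [closedC]
    apply Finset.image_congr
    intro n hn
    rcases Finset.mem_insert.mp hn with rfl | hn'
    · exact hc2v0
    · exact hc2old n (hNsub hn')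
  have hclosed' : closedC G col2 v0 = insert s1 (insert s2 (closedC F col v0)) := by
    rw [closedC, hinsert, Finset.image_insert, Finset.image_insert, himgold, hc2n1, hc2n2]
  have htri_sub : ({col v0, col t1, col t2} : Finset (Fin 6)) ⊆ closedC F col v0 := by
    intro i hi
    simp only [Finset.mem_insert, Finset.mem_singleton] at hi
    rcases hi with rfl | rfl | rfl
    · exact Finset.mem_image.mpr ⟨v0, Finset.mem_insert_self _ _, rfl⟩
    · exact Finset.mem_image.mpr ⟨t1, Finset.mem_insert_of_mem ht1, rfl⟩
    · exact Finset.mem_image.mpr ⟨t2, Finset.mem_insert_of_mem ht2, rfl⟩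
  have hdpos : 0 < rDeg F v0 := Finset.card_pos.mpr ⟨t1, ht1⟩
  have hcle : (closedC F col v0).card ≤ rDeg F v0 + 1 :=
    le_trans Finset.card_image_le (Finset.card_insert_le _ _)
  obtain ⟨k, hk⟩ := heven
  have hcases : rDeg F v0 = 2 ∨ rDeg F v0 = 4 ∨ 6 ≤ rDeg F v0 := by omega
  rcases hcases with hd | hd | hd
  · -- degree 2 : the neighborhood is exactly {t1, t2}
    have hNeq : rNbr F v0 = {t1, t2} := by
      symm
      apply Finset.eq_of_subset_of_card_le
      · intro i hi
        simp only [Finset.mem_insert, Finset.mem_singleton] at hi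
        rcases hi with rfl | rfl
        exacts [ht1, ht2]
      · rw [rDeg] at hd
        rw [hd, Finset.card_insert_of_notMem (by simp [ht12]), Finset.card_singleton]
    have hclo5 : closedC G col2 v0 = Finset.univ \ {s3} := by
      have hset : closedC G col2 v0 = ({col v0, col t1, col t2, s1, s2} : Finset (Fin 6)) := by
        rw [hclosed', closedC, hNeq, Finset.image_insert, Finset.image_insert,
          Finset.image_singleton]
        ext i
        simp only [Finset.mem_insert, Finset.mem_singleton]
        constructor
        · rintro (rfl | rfl | rfl | rfl | rfl) <;> simp
        · rintro (rfl | rfl | rfl | rfl | rfl) <;> simp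
      rw [hset]
      apply Finset.eq_of_subset_of_card_le
      · intro i hi
        simp only [Finset.mem_sdiff, Finset.mem_univ, Finset.mem_singleton, true_and]
        exact h56 i hi
      · rw [Finset.card_sdiff_of_subset (by simp), hS5card]
        simp
    refine ⟨hdeg, ?_, fun _ => ⟨hclo5, hNeq⟩⟩
    rw [hdeg, hd, hclo5, Finset.card_sdiff_of_subset (by simp)]
    simp
  · -- degree 4 : the missing color gets added
    have hclocard : (closedC F col v0).card = 5 := by
      rw [hd] at hclo hcle
      omega
    have hsub : Finset.univ ⊆ closedC G col2 v0 := by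
      intro i _
      rw [hclosed']
      by_cases hic : i ∈ closedC F col v0
      · simp [hic]
      · have hi3 : i ≠ s3 := hmiss hd i hic
        have hi6 : i ∈ S6 := hS6univ.symm ▸ Finset.mem_univ i
        simp only [hS6, Finset.mem_insert, Finset.mem_singleton] at hi6
        have h1 : i ≠ col v0 := fun h => hic (h ▸ htri_sub (by simp))
        have h2 : i ≠ col t1 := fun h => hic (h ▸ htri_sub (by simp))
        have h3 : i ≠ col t2 := fun h => hic (h ▸ htri_sub (by simp))
        simp only [Finset.mem_insert, Finset.mem_singleton]
        tauto
    have hclou : closedC G col2 v0 = Finset.univ := Finset.univ_subset_iff.mp hsub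
    refine ⟨hdeg, ?_, fun h4 => absurd (hdeg.symm.trans h4) (by omega)⟩
    rw [hclou, hdeg, hd]
    simp
  · -- degree at least 6
    have hge6 : 6 ≤ (closedC F col v0).card := by
      have : min 6 (rDeg F v0 + 1) = 6 := by omega
      omega
    have hsub : closedC F col v0 ⊆ closedC G col2 v0 := by
      rw [hclosed']
      exact (Finset.subset_insert _ _).trans (Finset.subset_insert _ _)
    have := Finset.card_le_card hsub
    refine ⟨hdeg, by omega, fun h4 => absurd (hdeg.symm.trans h4) (by omega)⟩


set_option maxHeartbeats 4000000 in
lemma step_good (F : Finset (Finset ℕ)) (a b c x y z : ℕ)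
    (hface : ({a, b, c} : Finset ℕ) ∈ F)
    (hnodup : ([a, b, c, x, y, z] : List ℕ).Nodup)
    (hx : x ∉ rVerts F) (hy : y ∉ rVerts F) (hz : z ∉ rVerts F)
    (col : ℕ → Fin 6) (hgood : Good F col) :
    ∃ col2, Good (newF F a b c x y z) col2 := by
  classical
  obtain ⟨hprop, heven, hclo, hdis⟩ := hgood
  obtain ⟨hab, hac, hax, hay, haz, hbc, hbx, hby, hbz, hcx, hcy, hcz, hxy, hxz, hyz⟩ :=
    nodup_ne hnodup
  have hTa : a ∈ ({a, b, c} : Finset ℕ) := by simp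
  have hTb : b ∈ ({a, b, c} : Finset ℕ) := by simp
  have hTc : c ∈ ({a, b, c} : Finset ℕ) := by simp
  have hVa : a ∈ rVerts F := mem_rVerts.mpr ⟨_, hface, hTa⟩
  have hVb : b ∈ rVerts F := mem_rVerts.mpr ⟨_, hface, hTb⟩
  have hVc : c ∈ rVerts F := mem_rVerts.mpr ⟨_, hface, hTc⟩
  have hAB : (facesGraph F).Adj a b := ⟨hab, _, hface, hTa, hTb⟩
  have hAC : (facesGraph F).Adj a c := ⟨hac, _, hface, hTa, hTc⟩
  have hBC : (facesGraph F).Adj b c := ⟨hbc, _, hface, hTb, hTc⟩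
  have hNab : b ∈ rNbr F a := mem_rNbr.mpr hAB
  have hNac : c ∈ rNbr F a := mem_rNbr.mpr hAC
  have hNba : a ∈ rNbr F b := mem_rNbr.mpr hAB.symm
  have hNbc : c ∈ rNbr F b := mem_rNbr.mpr hBC
  have hNca : a ∈ rNbr F c := mem_rNbr.mpr hAC.symm
  have hNcb : b ∈ rNbr F c := mem_rNbr.mpr hBC.symm
  have dab : col a ≠ col b := hprop _ _ hAB
  have dac : col a ≠ col c := hprop _ _ hAC
  have dbc : col b ≠ col c := hprop _ _ hBC
  have hcle : ∀ v, (closedC F col v).card ≤ rDeg F v + 1 :=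
    fun v => le_trans Finset.card_image_le (Finset.card_insert_le _ _)
  set A := if rDeg F a = 4 then Finset.univ \ closedC F col a else (∅ : Finset (Fin 6))
    with hAdef
  set B := if rDeg F b = 4 then Finset.univ \ closedC F col b else (∅ : Finset (Fin 6))
    with hBdef
  set C := if rDeg F c = 4 then Finset.univ \ closedC F col c else (∅ : Finset (Fin 6))
    with hCdef
  have hcard1 : ∀ v, v ∈ rVerts F → rDeg F v = 4 →
      (Finset.univ \ closedC F col v).card = 1 := by
    intro v hv h4
    have h1 := hclo v hv
    have h2 := hcle v
    rw [h4] at h1 h2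
    rw [Finset.card_sdiff_of_subset (Finset.subset_univ _)]
    have h3 : (Finset.univ : Finset (Fin 6)).card = 6 := by simp
    omega
  have hAcard : A.card ≤ 1 := by
    rw [hAdef]; split_ifs with h4
    · rw [hcard1 a hVa h4]
    · simp
  have hBcard : B.card ≤ 1 := by
    rw [hBdef]; split_ifs with h4
    · rw [hcard1 b hVb h4]
    · simp
  have hCcard : C.card ≤ 1 := by
    rw [hCdef]; split_ifs with h4
    · rw [hcard1 c hVc h4]
    · simp
  have hdisj : ∀ u v : ℕ, u ∈ rVerts F → v ∈ rVerts F → (facesGraph F).Adj u v →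
      ∀ h4u : rDeg F u = 4, ∀ h4v : rDeg F v = 4,
      Disjoint (Finset.univ \ closedC F col u) (Finset.univ \ closedC F col v) := by
    intro u v hu hv hadj h4u h4v
    rw [Finset.disjoint_left]
    intro i hiu hiv
    apply hdis u v h4u h4v hadj
    have e1 : Finset.univ \ closedC F col u = {i} :=
      Finset.eq_singleton_iff_unique_mem.mpr
        ⟨hiu, fun j hj => Finset.card_le_one.mp (le_of_eq (hcard1 u hu h4u)) j hj i hiu⟩
    have e2 : Finset.univ \ closedC F col v = {i} :=
      Finset.eq_singleton_iff_unique_mem.mpr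
        ⟨hiv, fun j hj => Finset.card_le_one.mp (le_of_eq (hcard1 v hv h4v)) j hj i hiv⟩
    have e3 := e1.trans e2.symm
    rw [← Finset.sdiff_sdiff_eq_self (Finset.subset_univ (closedC F col u)), e3,
      Finset.sdiff_sdiff_eq_self (Finset.subset_univ _)]
  have hdisAB : Disjoint A B := by
    rw [hAdef, hBdef]
    split_ifs with h4a h4b h4b
    · exact hdisj a b hVa hVb hAB h4a h4b
    · simp
    · simp
    · simp
  have hdisAC : Disjoint A C := by
    rw [hAdef, hCdef]
    split_ifs with h4a h4c h4c
    · exact hdisj a c hVa hVc hAC h4a h4c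
    · simp
    · simp
    · simp
  have hdisBC : Disjoint B C := by
    rw [hBdef, hCdef]
    split_ifs with h4b h4c h4c
    · exact hdisj b c hVb hVc hBC h4b h4c
    · simp
    · simp
    · simp
  have htri3 : ({col a, col b, col c} : Finset (Fin 6)).card = 3 := by
    rw [Finset.card_insert_of_notMem (by simp [dab, dac]),
      Finset.card_insert_of_notMem (by simp [dbc]), Finset.card_singleton]
  have hfreecard : ((Finset.univ : Finset (Fin 6)) \ {col a, col b, col c}).card = 3 := by
    rw [Finset.card_sdiff_of_subset (Finset.subset_univ _), htri3]
    rfl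
  obtain ⟨p, hp, q, hq, r, hr, dpq, dpr, dqr, hpA, hqB, hrC⟩ :=
    pick3 _ A B C hfreecard hdisAB hdisAC hdisBC hAcard hBcard hCcard
  simp only [Finset.mem_sdiff, Finset.mem_univ, true_and, Finset.mem_insert,
    Finset.mem_singleton, not_or] at hp hq hr
  obtain ⟨dpa, dpb, dpc⟩ := hp
  obtain ⟨dqa, dqb, dqc⟩ := hq
  obtain ⟨dra, drb, drc⟩ := hr
  set col2 : ℕ → Fin 6 :=
    fun n => if n = x then p else if n = y then q else if n = z then r else col n with hcol2
  have c2x : col2 x = p := by simp [hcol2]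
  have c2y : col2 y = q := by simp [hcol2, Ne.symm hxy]
  have c2z : col2 z = r := by simp [hcol2, Ne.symm hxz, Ne.symm hyz]
  have c2old : ∀ n, n ≠ x → n ≠ y → n ≠ z → col2 n = col n := by
    intro n h1 h2 h3; simp [hcol2, h1, h2, h3]
  have c2V : ∀ n ∈ rVerts F, col2 n = col n := fun n hn =>
    c2old n (fun h => hx (h ▸ hn)) (fun h => hy (h ▸ hn)) (fun h => hz (h ▸ hn))
  have c2a : col2 a = col a := c2V a hVa
  have c2b : col2 b = col b := c2V b hVb
  have c2c : col2 c = col c := c2V c hVc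
  have hS6 : ({col a, col b, col c, p, q, r} : Finset (Fin 6)).card = 6 := by
    rw [Finset.card_insert_of_notMem
        (by simp [dab, dac, Ne.symm dpa, Ne.symm dqa, Ne.symm dra]),
      Finset.card_insert_of_notMem (by simp [dbc, Ne.symm dpb, Ne.symm dqb, Ne.symm drb]),
      Finset.card_insert_of_notMem (by simp [Ne.symm dpc, Ne.symm dqc, Ne.symm drc]),
      Finset.card_insert_of_notMem (by simp [dpq, dpr]),
      Finset.card_insert_of_notMem (by simp [dqr]), Finset.card_singleton]
  have hunivA : ({col2 a, col b, col c, q, r, p} : Finset (Fin 6)).card = 6 := by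
    have he : ({col2 a, col b, col c, q, r, p} : Finset (Fin 6)) =
        {col a, col b, col c, p, q, r} := by
      rw [c2a]
      ext i
      simp only [Finset.mem_insert, Finset.mem_singleton]
      constructor <;> (rintro (rfl | rfl | rfl | rfl | rfl | rfl) <;> simp)
    rw [he]; exact hS6
  have hunivB : ({col2 b, col a, col c, p, r, q} : Finset (Fin 6)).card = 6 := by
    have he : ({col2 b, col a, col c, p, r, q} : Finset (Fin 6)) =
        {col a, col b, col c, p, q, r} := by
      rw [c2b]
      ext i
      simp only [Finset.mem_insert, Finset.mem_singleton]
      constructor <;> (rintro (rfl | rfl | rfl | rfl | rfl | rfl) <;> simp)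
    rw [he]; exact hS6
  have hunivC : ({col2 c, col a, col b, p, q, r} : Finset (Fin 6)).card = 6 := by
    have he : ({col2 c, col a, col b, p, q, r} : Finset (Fin 6)) =
        {col a, col b, col c, p, q, r} := by
      rw [c2c]
      ext i
      simp only [Finset.mem_insert, Finset.mem_singleton]
      constructor <;> (rintro (rfl | rfl | rfl | rfl | rfl | rfl) <;> simp)
    rw [he]; exact hS6
  have hmissA : rDeg F a = 4 → ∀ i, i ∉ closedC F col a → i ≠ p := by
    intro h4 i hi heq
    subst heq
    apply hpA
    rw [hAdef, if_pos h4]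
    exact Finset.mem_sdiff.mpr ⟨Finset.mem_univ _, hi⟩
  have hmissB : rDeg F b = 4 → ∀ i, i ∉ closedC F col b → i ≠ q := by
    intro h4 i hi heq
    subst heq
    apply hqB
    rw [hBdef, if_pos h4]
    exact Finset.mem_sdiff.mpr ⟨Finset.mem_univ _, hi⟩
  have hmissC : rDeg F c = 4 → ∀ i, i ∉ closedC F col c → i ≠ r := by
    intro h4 i hi heq
    subst heq
    apply hrC
    rw [hCdef, if_pos h4]
    exact Finset.mem_sdiff.mpr ⟨Finset.mem_univ _, hi⟩
  obtain ⟨hdegA, hcloA', hA4⟩ :=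
    tri_update F (newF F a b c x y z) col col2 a b c y z q r p hNab hNac hbc hy hz hyz
      (rNbr_newF_a hface hx hy hz hnodup) c2V c2a c2y c2z (hclo a hVa) (heven a hVa)
      hunivA hmissA
  obtain ⟨hdegB, hcloB', hB4⟩ :=
    tri_update F (newF F a b c x y z) col col2 b a c x z p r q hNba hNbc hac hx hz hxz
      (rNbr_newF_b hface hx hy hz hnodup) c2V c2b c2x c2z (hclo b hVb) (heven b hVb)
      hunivB hmissB
  obtain ⟨hdegC, hcloC', hC4⟩ :=
    tri_update F (newF F a b c x y z) col col2 c a b x y p q r hNca hNcb hab hx hy hxy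
      (rNbr_newF_c hface hx hy hz hnodup) c2V c2c c2x c2y (hclo c hVc) (heven c hVc)
      hunivC hmissC
  -- closed neighborhoods of the new vertices
  have hclx' : closedC (newF F a b c x y z) col2 x = Finset.univ \ {col a} := by
    rw [closedC, rNbr_newF_x hx hnodup, Finset.image_insert, Finset.image_insert,
      Finset.image_insert, Finset.image_insert, Finset.image_singleton,
      c2x, c2b, c2c, c2y, c2z]
    apply Finset.eq_of_subset_of_card_le
    · intro i hi
      simp only [Finset.mem_insert, Finset.mem_singleton] at hi
      simp only [Finset.mem_sdiff, Finset.mem_univ, Finset.mem_singleton, true_and]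
      rcases hi with rfl | rfl | rfl | rfl | rfl
      exacts [dpa, Ne.symm dab, Ne.symm dac, dqa, dra]
    · rw [Finset.card_sdiff_of_subset (by simp),
        Finset.card_insert_of_notMem (by simp [dpb, dpc, dpq, dpr]),
        Finset.card_insert_of_notMem (by simp [dbc, Ne.symm dqb, Ne.symm drb]),
        Finset.card_insert_of_notMem (by simp [Ne.symm dqc, Ne.symm drc]),
        Finset.card_insert_of_notMem (by simp [dqr]), Finset.card_singleton]
      rfl
  have hcly' : closedC (newF F a b c x y z) col2 y = Finset.univ \ {col b} := by
    rw [closedC, rNbr_newF_y hy hnodup, Finset.image_insert, Finset.image_insert,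
      Finset.image_insert, Finset.image_insert, Finset.image_singleton,
      c2y, c2a, c2c, c2x, c2z]
    apply Finset.eq_of_subset_of_card_le
    · intro i hi
      simp only [Finset.mem_insert, Finset.mem_singleton] at hi
      simp only [Finset.mem_sdiff, Finset.mem_univ, Finset.mem_singleton, true_and]
      rcases hi with rfl | rfl | rfl | rfl | rfl
      exacts [dqb, dab, Ne.symm dbc, dpb, drb]
    · rw [Finset.card_sdiff_of_subset (by simp),
        Finset.card_insert_of_notMem (by simp [dqa, dqc, dqr, Ne.symm dpq]),
        Finset.card_insert_of_notMem (by simp [dac, Ne.symm dpa, Ne.symm dra]),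
        Finset.card_insert_of_notMem (by simp [Ne.symm dpc, Ne.symm drc]),
        Finset.card_insert_of_notMem (by simp [dpr]), Finset.card_singleton]
      rfl
  have hclz' : closedC (newF F a b c x y z) col2 z = Finset.univ \ {col c} := by
    rw [closedC, rNbr_newF_z hz hnodup, Finset.image_insert, Finset.image_insert,
      Finset.image_insert, Finset.image_insert, Finset.image_singleton,
      c2z, c2a, c2b, c2x, c2y]
    apply Finset.eq_of_subset_of_card_le
    · intro i hi
      simp only [Finset.mem_insert, Finset.mem_singleton] at hi
      simp only [Finset.mem_sdiff, Finset.mem_univ, Finset.mem_singleton, true_and]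
      rcases hi with rfl | rfl | rfl | rfl | rfl
      exacts [drc, dac, dbc, dpc, dqc]
    · rw [Finset.card_sdiff_of_subset (by simp),
        Finset.card_insert_of_notMem (by simp [dra, drb, Ne.symm dpr, Ne.symm dqr]),
        Finset.card_insert_of_notMem (by simp [dab, Ne.symm dpa, Ne.symm dqa]),
        Finset.card_insert_of_notMem (by simp [Ne.symm dpb, Ne.symm dqb]),
        Finset.card_insert_of_notMem (by simp [dpq]), Finset.card_singleton]
      rfl
  have hdegx : rDeg (newF F a b c x y z) x = 4 := by
    rw [rDeg, rNbr_newF_x hx hnodup,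
      Finset.card_insert_of_notMem (by simp [hbc, hby, hbz]),
      Finset.card_insert_of_notMem (by simp [hcy, hcz]),
      Finset.card_insert_of_notMem (by simp [hyz]), Finset.card_singleton]
  have hdegy : rDeg (newF F a b c x y z) y = 4 := by
    rw [rDeg, rNbr_newF_y hy hnodup,
      Finset.card_insert_of_notMem (by simp [hac, hax, haz]),
      Finset.card_insert_of_notMem (by simp [hcx, hcz]),
      Finset.card_insert_of_notMem (by simp [hxz]), Finset.card_singleton]
  have hdegz : rDeg (newF F a b c x y z) z = 4 := by
    rw [rDeg, rNbr_newF_z hz hnodup,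
      Finset.card_insert_of_notMem (by simp [hab, hax, hay]),
      Finset.card_insert_of_notMem (by simp [hbx, hby]),
      Finset.card_insert_of_notMem (by simp [hxy]), Finset.card_singleton]
  have hcloold : ∀ v, v ∈ rVerts F → v ≠ a → v ≠ b → v ≠ c →
      closedC (newF F a b c x y z) col2 v = closedC F col v := by
    intro v hv h1 h2 h3
    have hvx : v ≠ x := fun h => hx (h ▸ hv)
    have hvy : v ≠ y := fun h => hy (h ▸ hv)
    have hvz : v ≠ z := fun h => hz (h ▸ hv)
    rw [closedC, rNbr_newF_old hface hx hy hz hnodup h1 h2 h3 hvx hvy hvz, closedC]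
    apply Finset.image_congr
    intro n hn
    rcases Finset.mem_insert.mp hn with rfl | hn'
    · exact c2V n hv
    · exact c2V n (Finset.filter_subset _ _ hn')
  have hdegold' : ∀ v, v ≠ a → v ≠ b → v ≠ c → v ≠ x → v ≠ y → v ≠ z →
      rDeg (newF F a b c x y z) v = rDeg F v := by
    intro v h1 h2 h3 h4 h5 h6
    rw [rDeg, rNbr_newF_old hface hx hy hz hnodup h1 h2 h3 h4 h5 h6, rDeg]
  refine ⟨col2, ?_, ?_, ?_, ?_⟩
  · -- proper coloring
    intro u v hadj
    rcases eq_or_ne u x with rfl | hux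
    · rcases (adj_new_x hx hnodup).mp hadj with rfl | rfl | rfl | rfl
      · rw [c2x, c2b]; exact dpb
      · rw [c2x, c2c]; exact dpc
      · rw [c2x, c2y]; exact dpq
      · rw [c2x, c2z]; exact dpr
    rcases eq_or_ne u y with rfl | huy
    · rcases (adj_new_y hy hnodup).mp hadj with rfl | rfl | rfl | rfl
      · rw [c2y, c2a]; exact dqa
      · rw [c2y, c2c]; exact dqc
      · rw [c2y, c2x]; exact Ne.symm dpq
      · rw [c2y, c2z]; exact dqr
    rcases eq_or_ne u z with rfl | huz
    · rcases (adj_new_z hz hnodup).mp hadj with rfl | rfl | rfl | rfl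
      · rw [c2z, c2a]; exact dra
      · rw [c2z, c2b]; exact drb
      · rw [c2z, c2x]; exact Ne.symm dpr
      · rw [c2z, c2y]; exact Ne.symm dqr
    rcases eq_or_ne v x with rfl | hvx
    · rcases (adj_new_x hx hnodup).mp hadj.symm with rfl | rfl | rfl | rfl
      · rw [c2x, c2b]; exact Ne.symm dpb
      · rw [c2x, c2c]; exact Ne.symm dpc
      · exact absurd rfl huy
      · exact absurd rfl huz
    rcases eq_or_ne v y with rfl | hvy
    · rcases (adj_new_y hy hnodup).mp hadj.symm with rfl | rfl | rfl | rfl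
      · rw [c2y, c2a]; exact Ne.symm dqa
      · rw [c2y, c2c]; exact Ne.symm dqc
      · exact absurd rfl hux
      · exact absurd rfl huz
    rcases eq_or_ne v z with rfl | hvz
    · rcases (adj_new_z hz hnodup).mp hadj.symm with rfl | rfl | rfl | rfl
      · rw [c2z, c2a]; exact Ne.symm dra
      · rw [c2z, c2b]; exact Ne.symm drb
      · exact absurd rfl hux
      · exact absurd rfl huy
    · have hadj' := (adj_new_old hface hux huy huz hvx hvy hvz).mp hadj
      obtain ⟨hne, t, ht, hut, hvt⟩ := hadj'
      have hu := mem_rVerts.mpr ⟨t, ht, hut⟩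
      have hv := mem_rVerts.mpr ⟨t, ht, hvt⟩
      rw [c2V u hu, c2V v hv]
      exact hprop u v ⟨hne, t, ht, hut, hvt⟩
  · -- even degrees
    intro v hv
    rw [rVerts_newF hface] at hv
    rcases Finset.mem_union.mp hv with hv | hv
    · rcases eq_or_ne v a with rfl | h1
      · rw [hdegA]; exact (heven _ hVa).add even_two
      rcases eq_or_ne v b with rfl | h2
      · rw [hdegB]; exact (heven _ hVb).add even_two
      rcases eq_or_ne v c with rfl | h3
      · rw [hdegC]; exact (heven _ hVc).add even_two
      · have hvx : v ≠ x := fun h => hx (h ▸ hv)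
        have hvy : v ≠ y := fun h => hy (h ▸ hv)
        have hvz : v ≠ z := fun h => hz (h ▸ hv)
        rw [hdegold' v h1 h2 h3 hvx hvy hvz]
        exact heven v hv
    · simp only [Finset.mem_insert, Finset.mem_singleton] at hv
      rcases hv with rfl | rfl | rfl
      · rw [hdegx]; exact ⟨2, rfl⟩
      · rw [hdegy]; exact ⟨2, rfl⟩
      · rw [hdegz]; exact ⟨2, rfl⟩
  · -- dynamic coloring bound
    intro v hv
    rw [rVerts_newF hface] at hv
    rcases Finset.mem_union.mp hv with hv | hv
    · rcases eq_or_ne v a with rfl | h1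
      · exact hcloA'
      rcases eq_or_ne v b with rfl | h2
      · exact hcloB'
      rcases eq_or_ne v c with rfl | h3
      · exact hcloC'
      · have hvx : v ≠ x := fun h => hx (h ▸ hv)
        have hvy : v ≠ y := fun h => hy (h ▸ hv)
        have hvz : v ≠ z := fun h => hz (h ▸ hv)
        rw [hdegold' v h1 h2 h3 hvx hvy hvz, hcloold v hv h1 h2 h3]
        exact hclo v hv
    · simp only [Finset.mem_insert, Finset.mem_singleton] at hv
      rcases hv with rfl | rfl | rfl
      · rw [hdegx, hclx', Finset.card_sdiff_of_subset (by simp)]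
        rfl
      · rw [hdegy, hcly', Finset.card_sdiff_of_subset (by simp)]
        rfl
      · rw [hdegz, hclz', Finset.card_sdiff_of_subset (by simp)]
        rfl
  · -- adjacent degree-4 vertices have distinct missing colors
    intro u v h4u h4v hadj
    rcases eq_or_ne u x with rfl | hux
    · rcases (adj_new_x hx hnodup).mp hadj with rfl | rfl | rfl | rfl
      · rw [hclx', (hB4 h4v).1]; exact sdiff_singleton_ne (Ne.symm dqa)
      · rw [hclx', (hC4 h4v).1]; exact sdiff_singleton_ne (Ne.symm dra)
      · rw [hclx', hcly']; exact sdiff_singleton_ne dab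
      · rw [hclx', hclz']; exact sdiff_singleton_ne dac
    rcases eq_or_ne u y with rfl | huy
    · rcases (adj_new_y hy hnodup).mp hadj with rfl | rfl | rfl | rfl
      · rw [hcly', (hA4 h4v).1]; exact sdiff_singleton_ne (Ne.symm dpb)
      · rw [hcly', (hC4 h4v).1]; exact sdiff_singleton_ne (Ne.symm drb)
      · rw [hcly', hclx']; exact sdiff_singleton_ne (Ne.symm dab)
      · rw [hcly', hclz']; exact sdiff_singleton_ne dbc
    rcases eq_or_ne u z with rfl | huz
    · rcases (adj_new_z hz hnodup).mp hadj with rfl | rfl | rfl | rfl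
      · rw [hclz', (hA4 h4v).1]; exact sdiff_singleton_ne (Ne.symm dpc)
      · rw [hclz', (hB4 h4v).1]; exact sdiff_singleton_ne (Ne.symm dqc)
      · rw [hclz', hclx']; exact sdiff_singleton_ne (Ne.symm dac)
      · rw [hclz', hcly']; exact sdiff_singleton_ne (Ne.symm dbc)
    rcases eq_or_ne u a with rfl | hua
    · obtain ⟨hcloA4, hNA2⟩ := hA4 h4u
      have hv' := mem_rNbr.mpr hadj
      rw [rNbr_newF_a hface hx hy hz hnodup, hNA2] at hv'
      simp only [Finset.mem_insert, Finset.mem_singleton] at hv'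
      rcases hv' with rfl | rfl | rfl | rfl
      · rw [hcloA4, hcly']; exact sdiff_singleton_ne dpb
      · rw [hcloA4, hclz']; exact sdiff_singleton_ne dpc
      · rw [hcloA4, (hB4 h4v).1]; exact sdiff_singleton_ne dpq
      · rw [hcloA4, (hC4 h4v).1]; exact sdiff_singleton_ne dpr
    rcases eq_or_ne u b with rfl | hub
    · obtain ⟨hcloB4, hNB2⟩ := hB4 h4u
      have hv' := mem_rNbr.mpr hadj
      rw [rNbr_newF_b hface hx hy hz hnodup, hNB2] at hv'
      simp only [Finset.mem_insert, Finset.mem_singleton] at hv'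
      rcases hv' with rfl | rfl | rfl | rfl
      · rw [hcloB4, hclx']; exact sdiff_singleton_ne dqa
      · rw [hcloB4, hclz']; exact sdiff_singleton_ne dqc
      · rw [hcloB4, (hA4 h4v).1]; exact sdiff_singleton_ne (Ne.symm dpq)
      · rw [hcloB4, (hC4 h4v).1]; exact sdiff_singleton_ne dqr
    rcases eq_or_ne u c with rfl | huc
    · obtain ⟨hcloC4, hNC2⟩ := hC4 h4u
      have hv' := mem_rNbr.mpr hadj
      rw [rNbr_newF_c hface hx hy hz hnodup, hNC2] at hv'
      simp only [Finset.mem_insert, Finset.mem_singleton] at hv'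
      rcases hv' with rfl | rfl | rfl | rfl
      · rw [hcloC4, hclx']; exact sdiff_singleton_ne dra
      · rw [hcloC4, hcly']; exact sdiff_singleton_ne drb
      · rw [hcloC4, (hA4 h4v).1]; exact sdiff_singleton_ne (Ne.symm dpr)
      · rw [hcloC4, (hB4 h4v).1]; exact sdiff_singleton_ne (Ne.symm dqr)
    -- now u is an old vertex distinct from a, b, c
    rcases eq_or_ne v x with rfl | hvx
    · rcases (adj_new_x hx hnodup).mp hadj.symm with rfl | rfl | rfl | rfl
      exacts [absurd rfl hub, absurd rfl huc, absurd rfl huy, absurd rfl huz]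
    rcases eq_or_ne v y with rfl | hvy
    · rcases (adj_new_y hy hnodup).mp hadj.symm with rfl | rfl | rfl | rfl
      exacts [absurd rfl hua, absurd rfl huc, absurd rfl hux, absurd rfl huz]
    rcases eq_or_ne v z with rfl | hvz
    · rcases (adj_new_z hz hnodup).mp hadj.symm with rfl | rfl | rfl | rfl
      exacts [absurd rfl hua, absurd rfl hub, absurd rfl hux, absurd rfl huy]
    rcases eq_or_ne v a with rfl | hva
    · obtain ⟨hcloA4, hNA2⟩ := hA4 h4v
      have hu' := mem_rNbr.mpr hadj.symm
      rw [rNbr_newF_a hface hx hy hz hnodup, hNA2] at hu'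
      simp only [Finset.mem_insert, Finset.mem_singleton] at hu'
      rcases hu' with rfl | rfl | rfl | rfl
      exacts [absurd rfl huy, absurd rfl huz, absurd rfl hub, absurd rfl huc]
    rcases eq_or_ne v b with rfl | hvb
    · obtain ⟨hcloB4, hNB2⟩ := hB4 h4v
      have hu' := mem_rNbr.mpr hadj.symm
      rw [rNbr_newF_b hface hx hy hz hnodup, hNB2] at hu'
      simp only [Finset.mem_insert, Finset.mem_singleton] at hu'
      rcases hu' with rfl | rfl | rfl | rfl
      exacts [absurd rfl hux, absurd rfl huz, absurd rfl hua, absurd rfl huc]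
    rcases eq_or_ne v c with rfl | hvc
    · obtain ⟨hcloC4, hNC2⟩ := hC4 h4v
      have hu' := mem_rNbr.mpr hadj.symm
      rw [rNbr_newF_c hface hx hy hz hnodup, hNC2] at hu'
      simp only [Finset.mem_insert, Finset.mem_singleton] at hu'
      rcases hu' with rfl | rfl | rfl | rfl
      exacts [absurd rfl hux, absurd rfl huy, absurd rfl hua, absurd rfl hub]
    · have hadj' := (adj_new_old hface hux huy huz hvx hvy hvz).mp hadj
      obtain ⟨hne, t, ht, hut, hvt⟩ := hadj'
      have hu := mem_rVerts.mpr ⟨t, ht, hut⟩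
      have hv' := mem_rVerts.mpr ⟨t, ht, hvt⟩
      rw [hcloold u hu hua hub huc, hcloold v hv' hva hvb hvc]
      rw [hdegold' u hua hub huc hux huy huz] at h4u
      rw [hdegold' v hva hvb hvc hvx hvy hvz] at h4v
      exact hdis u v h4u h4v ⟨hne, t, ht, hut, hvt⟩

theorem key (F : Finset (Finset ℕ)) (h : RecEulerian F) : ∃ c, Good F c := by
  induction h with
  | base a b c hab hac hbc => exact base_good a b c hab hac hbc
  | step F a b c x y z hrec hface hnodup hx hy hz ih =>
      obtain ⟨col, hgood⟩ := ih
      exact step_good F a b c x y z hface hnodup hx hy hz col hgood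


theorem stmt18 (faces : Finset (Finset ℕ)) (h : RecEulerian faces) :
    ∃ c : ℕ → Fin 6,
      (∀ u v : ℕ, (facesGraph faces).Adj u v → c u ≠ c v) ∧
      (∀ v ∈ rVerts faces, min 5 (rDeg faces v) ≤ ((rNbr faces v).image c).card) ∧
      (∀ u v : ℕ, rDeg faces u = 4 → rDeg faces v = 4 → (facesGraph faces).Adj u v →
        (Finset.univ.filter fun i : Fin 6 => c u ≠ i ∧ ∀ w ∈ rNbr faces u, c w ≠ i) ≠
        (Finset.univ.filter fun i : Fin 6 => c v ≠ i ∧ ∀ w ∈ rNbr faces v, c w ≠ i)) := by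
  obtain ⟨c, h1, h2, h3, h4⟩ := key faces h
  refine ⟨c, h1, ?_, ?_⟩
  · intro v hv
    have := h3 v hv
    have hcard : (closedC faces c v).card ≤ ((rNbr faces v).image c).card + 1 := by
      rw [closedC, Finset.image_insert]
      exact Finset.card_insert_le _ _
    have : min 6 (rDeg faces v + 1) = min 5 (rDeg faces v) + 1 := by omega
    omega
  · intro u v hu hv hadj
    rw [missing_eq, missing_eq]
    intro he
    apply h4 u v hu hv hadj
    have h1 : closedC faces c u ⊆ Finset.univ := Finset.subset_univ _
    have h2 : closedC faces c v ⊆ Finset.univ := Finset.subset_univ _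
    rw [← Finset.sdiff_sdiff_eq_self h1, ← Finset.sdiff_sdiff_eq_self h2, he]
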